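/- There exists a primitive embedding ι of the lattice A₂ (ℤ² with Gram matrix [[−2,1],[1,−2]]) into the lattice E₈ such that the orthogonal complement of ι(ℤ²) in E₈, equipped with the restricted bilinear form, is isometric to the lattice E₆. -/

import Mathlib

open Matrix

/-- The hyperbolic lattice `U`. -/
def U : Matrix (Fin 2) (Fin 2) ℤ := !![0, 1; 1, 0]

/-- The root lattice `A₁` (negative definite). -/
def A1 : Matrix (Fin 1) (Fin 1) ℤ := !![-2]

/-- The root lattice `A₂` (negative definite). -/
def A2 : Matrix (Fin 2) (Fin 2) ℤ := !![-2, 1; 1, -2]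

/-- The root lattice `A₆` (negative definite). -/
def A6 : Matrix (Fin 6) (Fin 6) ℤ :=
  !![-2, 1, 0, 0, 0, 0;
    1, -2, 1, 0, 0, 0;
    0, 1, -2, 1, 0, 0;
    0, 0, 1, -2, 1, 0;
    0, 0, 0, 1, -2, 1;
    0, 0, 0, 0, 1, -2]

/-- The lattice `C₈⁶` of Nishiyama's lemma. -/
def C86 : Matrix (Fin 2) (Fin 2) ℤ := !![-4, 1; 1, -2]

/-- The root lattice `E₈` (negative of the Cartan matrix, Bourbaki numbering). -/
def E8 : Matrix (Fin 8) (Fin 8) ℤ :=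
  !![-2, 0, 1, 0, 0, 0, 0, 0;
    0, -2, 0, 1, 0, 0, 0, 0;
    1, 0, -2, 1, 0, 0, 0, 0;
    0, 1, 1, -2, 1, 0, 0, 0;
    0, 0, 0, 1, -2, 1, 0, 0;
    0, 0, 0, 0, 1, -2, 1, 0;
    0, 0, 0, 0, 0, 1, -2, 1;
    0, 0, 0, 0, 0, 0, 1, -2]

/-- The root lattice `E₇` (nodes 1–7 of `E₈` in Bourbaki numbering). -/
def E7 : Matrix (Fin 7) (Fin 7) ℤ :=
  !![-2, 0, 1, 0, 0, 0, 0;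
    0, -2, 0, 1, 0, 0, 0;
    1, 0, -2, 1, 0, 0, 0;
    0, 1, 1, -2, 1, 0, 0;
    0, 0, 0, 1, -2, 1, 0;
    0, 0, 0, 0, 1, -2, 1;
    0, 0, 0, 0, 0, 1, -2]

/-- The root lattice `E₆` (nodes 1–6 of `E₈` in Bourbaki numbering). -/
def E6 : Matrix (Fin 6) (Fin 6) ℤ :=
  !![-2, 0, 1, 0, 0, 0;
    0, -2, 0, 1, 0, 0;
    1, 0, -2, 1, 0, 0;
    0, 1, 1, -2, 1, 0;
    0, 0, 0, 1, -2, 1;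
    0, 0, 0, 0, 1, -2]

/-- Block-diagonal (direct) sum of two Gram matrices. -/
def dsum {m n : ℕ} (A : Matrix (Fin m) (Fin m) ℤ) (B : Matrix (Fin n) (Fin n) ℤ) :
    Matrix (Fin (m + n)) (Fin (m + n)) ℤ :=
  Matrix.reindex finSumFinEquiv finSumFinEquiv (Matrix.fromBlocks A 0 0 B)

/-- The K3 lattice `Λ_K3 = U ⊕ U ⊕ U ⊕ E₈ ⊕ E₈`. -/
def LambdaK3 : Matrix (Fin 22) (Fin 22) ℤ := dsum (dsum (dsum (dsum U U) U) E8) E8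


section VecLemmas
variable {α : Type*} (a b c d e f g h : α)
@[simp] lemma v2_0 : (![a,b] : Fin 2 → α) (0 : Fin 2) = a := rfl
@[simp] lemma v2m_0 (hp : (0:ℕ) < 2) : (![a,b] : Fin 2 → α) ⟨0, hp⟩ = a := rfl
@[simp] lemma v2_1 : (![a,b] : Fin 2 → α) (1 : Fin 2) = b := rfl
@[simp] lemma v2m_1 (hp : (1:ℕ) < 2) : (![a,b] : Fin 2 → α) ⟨1, hp⟩ = b := rfl
@[simp] lemma v6_0 : (![a,b,c,d,e,f] : Fin 6 → α) (0 : Fin 6) = a := rfl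
@[simp] lemma v6m_0 (hp : (0:ℕ) < 6) : (![a,b,c,d,e,f] : Fin 6 → α) ⟨0, hp⟩ = a := rfl
@[simp] lemma v6_1 : (![a,b,c,d,e,f] : Fin 6 → α) (1 : Fin 6) = b := rfl
@[simp] lemma v6m_1 (hp : (1:ℕ) < 6) : (![a,b,c,d,e,f] : Fin 6 → α) ⟨1, hp⟩ = b := rfl
@[simp] lemma v6_2 : (![a,b,c,d,e,f] : Fin 6 → α) (2 : Fin 6) = c := rfl
@[simp] lemma v6m_2 (hp : (2:ℕ) < 6) : (![a,b,c,d,e,f] : Fin 6 → α) ⟨2, hp⟩ = c := rfl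
@[simp] lemma v6_3 : (![a,b,c,d,e,f] : Fin 6 → α) (3 : Fin 6) = d := rfl
@[simp] lemma v6m_3 (hp : (3:ℕ) < 6) : (![a,b,c,d,e,f] : Fin 6 → α) ⟨3, hp⟩ = d := rfl
@[simp] lemma v6_4 : (![a,b,c,d,e,f] : Fin 6 → α) (4 : Fin 6) = e := rfl
@[simp] lemma v6m_4 (hp : (4:ℕ) < 6) : (![a,b,c,d,e,f] : Fin 6 → α) ⟨4, hp⟩ = e := rfl
@[simp] lemma v6_5 : (![a,b,c,d,e,f] : Fin 6 → α) (5 : Fin 6) = f := rfl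
@[simp] lemma v6m_5 (hp : (5:ℕ) < 6) : (![a,b,c,d,e,f] : Fin 6 → α) ⟨5, hp⟩ = f := rfl
@[simp] lemma v8_0 : (![a,b,c,d,e,f,g,h] : Fin 8 → α) (0 : Fin 8) = a := rfl
@[simp] lemma v8m_0 (hp : (0:ℕ) < 8) : (![a,b,c,d,e,f,g,h] : Fin 8 → α) ⟨0, hp⟩ = a := rfl
@[simp] lemma v8_1 : (![a,b,c,d,e,f,g,h] : Fin 8 → α) (1 : Fin 8) = b := rfl
@[simp] lemma v8m_1 (hp : (1:ℕ) < 8) : (![a,b,c,d,e,f,g,h] : Fin 8 → α) ⟨1, hp⟩ = b := rfl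
@[simp] lemma v8_2 : (![a,b,c,d,e,f,g,h] : Fin 8 → α) (2 : Fin 8) = c := rfl
@[simp] lemma v8m_2 (hp : (2:ℕ) < 8) : (![a,b,c,d,e,f,g,h] : Fin 8 → α) ⟨2, hp⟩ = c := rfl
@[simp] lemma v8_3 : (![a,b,c,d,e,f,g,h] : Fin 8 → α) (3 : Fin 8) = d := rfl
@[simp] lemma v8m_3 (hp : (3:ℕ) < 8) : (![a,b,c,d,e,f,g,h] : Fin 8 → α) ⟨3, hp⟩ = d := rfl
@[simp] lemma v8_4 : (![a,b,c,d,e,f,g,h] : Fin 8 → α) (4 : Fin 8) = e := rfl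
@[simp] lemma v8m_4 (hp : (4:ℕ) < 8) : (![a,b,c,d,e,f,g,h] : Fin 8 → α) ⟨4, hp⟩ = e := rfl
@[simp] lemma v8_5 : (![a,b,c,d,e,f,g,h] : Fin 8 → α) (5 : Fin 8) = f := rfl
@[simp] lemma v8m_5 (hp : (5:ℕ) < 8) : (![a,b,c,d,e,f,g,h] : Fin 8 → α) ⟨5, hp⟩ = f := rfl
@[simp] lemma v8_6 : (![a,b,c,d,e,f,g,h] : Fin 8 → α) (6 : Fin 8) = g := rfl
@[simp] lemma v8m_6 (hp : (6:ℕ) < 8) : (![a,b,c,d,e,f,g,h] : Fin 8 → α) ⟨6, hp⟩ = g := rfl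
@[simp] lemma v8_7 : (![a,b,c,d,e,f,g,h] : Fin 8 → α) (7 : Fin 8) = h := rfl
@[simp] lemma v8m_7 (hp : (7:ℕ) < 8) : (![a,b,c,d,e,f,g,h] : Fin 8 → α) ⟨7, hp⟩ = h := rfl
end VecLemmas

/-- Image matrix of the embedding `A₂ ↪ E₈` (columns are the simple roots α₇, α₈). -/
def Mmat : Matrix (Fin 8) (Fin 2) ℤ :=
  !![0, 0; 0, 0; 0, 0; 0, 0; 0, 0; 0, 0; 1, 0; 0, 1]

/-- A left inverse of `Mmat`. -/
def LMmat : Matrix (Fin 2) (Fin 8) ℤ :=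
  !![0, 0, 0, 0, 0, 0, 1, 0; 0, 0, 0, 0, 0, 0, 0, 1]

/-- Image matrix of the embedding `E₆ ↪ E₈` onto the orthogonal complement of `A₂`. -/
def Nmat : Matrix (Fin 8) (Fin 6) ℤ :=
  !![-1, -1, -1, 1, 0, 0;
    -2, -1, 0, 0, 0, 1;
    -2, -1, -1, 0, 1, 0;
    -3, -1, -1, 0, 0, 1;
    -3, -1, 0, 0, 0, 0;
    -3, 0, 0, 0, 0, 0;
    -2, 0, 0, 0, 0, 0;
    -1, 0, 0, 0, 0, 0]

/-- A left inverse of `Nmat`. -/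
def LNmat : Matrix (Fin 6) (Fin 8) ℤ :=
  !![0, 0, 0, 0, 0, 0, 0, -1;
    0, 0, 0, 0, -1, 0, 0, 3;
    0, 1, 0, -1, 0, 0, 0, 1;
    1, 1, 0, -1, -1, 0, 0, 3;
    0, 1, 1, -1, -1, 0, 0, 2;
    0, 1, 0, 0, -1, 0, 0, 1]

lemma key {m n p : ℕ} (A : Matrix (Fin m) (Fin n) ℤ) (G : Matrix (Fin m) (Fin m) ℤ)
    (B : Matrix (Fin m) (Fin p) ℤ) (x : Fin n → ℤ) (y : Fin p → ℤ) :
    (A *ᵥ x) ⬝ᵥ (G *ᵥ (B *ᵥ y)) = x ⬝ᵥ ((Aᵀ * (G * B)) *ᵥ y) := by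
  rw [Matrix.mulVec_mulVec, Matrix.dotProduct_mulVec, Matrix.vecMul_mulVec,
    ← Matrix.dotProduct_mulVec]

lemma hLM : LMmat * Mmat = 1 := by decide
lemma hLN : LNmat * Nmat = 1 := by decide
lemma hME : Mmatᵀ * (E8 * Mmat) = A2 := by decide
lemma hNE : Nmatᵀ * (E8 * Nmat) = E6 := by decide
lemma hNM : Nmatᵀ * (E8 * Mmat) = 0 := by decide

lemma hMx (z : Fin 2 → ℤ) : Mmat.mulVec z = ![0, 0, 0, 0, 0, 0, z 0, z 1] := by
  simp [Mmat, Matrix.cons_mulVec, Matrix.cons_dotProduct, Matrix.vecHead, Matrix.vecTail]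

lemma hcol1 : E8 *ᵥ (Mmat.mulVec ![1, 0]) = ![0, 0, 0, 0, 0, 1, -2, 1] := by
  rw [hMx]
  funext i
  fin_cases i <;>
    simp [E8, Matrix.cons_mulVec, Matrix.cons_dotProduct, Matrix.vecHead, Matrix.vecTail]

lemma hcol2 : E8 *ᵥ (Mmat.mulVec ![0, 1]) = ![0, 0, 0, 0, 0, 0, 1, -2] := by
  rw [hMx]
  funext i
  fin_cases i <;>
    simp [E8, Matrix.cons_mulVec, Matrix.cons_dotProduct, Matrix.vecHead, Matrix.vecTail]

/-- Nishiyama: there is a primitive embedding of A₂ into E₈ whose orthogonal complement is isometric to E₆. -/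
theorem primitive_embedding_A2_E8 :
    ∃ ι : (Fin 2 → ℤ) →ₗ[ℤ] (Fin 8 → ℤ),
      -- ι is an embedding of the lattice (A₂) into (E₈) ...
      Function.Injective ι ∧
      (∀ x y : Fin 2 → ℤ, ι x ⬝ᵥ (E8 *ᵥ ι y) = x ⬝ᵥ (A2 *ᵥ y)) ∧
      -- ... which is primitive (its image is saturated, i.e. the cokernel is torsion-free) ...
      (∀ (v : Fin 8 → ℤ) (k : ℤ), k ≠ 0 → k • v ∈ LinearMap.range ι → v ∈ LinearMap.range ι) ∧
      -- ... and the orthogonal complement of the image of ι, with the restricted form,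
      -- is isometric to (E₆): there is an injective linear map j preserving the forms
      -- whose range is exactly the orthogonal complement of the image of ι.
      ∃ j : (Fin 6 → ℤ) →ₗ[ℤ] (Fin 8 → ℤ),
        Function.Injective j ∧
        (∀ x y : Fin 6 → ℤ, j x ⬝ᵥ (E8 *ᵥ j y) = x ⬝ᵥ (E6 *ᵥ y)) ∧
        (∀ v : Fin 8 → ℤ, v ∈ LinearMap.range j ↔ ∀ x : Fin 2 → ℤ, v ⬝ᵥ (E8 *ᵥ ι x) = 0) := by
  refine ⟨Mmat.mulVecLin, ?_, ?_, ?_, Nmat.mulVecLin, ?_, ?_, ?_⟩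
  · -- injectivity of ι
    intro a b hab
    have h := congrArg (LMmat.mulVec) hab
    simpa [Matrix.mulVecLin_apply, Matrix.mulVec_mulVec, hLM, Matrix.one_mulVec] using h
  · -- ι preserves the forms
    intro x y
    rw [Matrix.mulVecLin_apply, Matrix.mulVecLin_apply, key, hME]
  · -- primitivity
    intro v k hk ⟨x, hx⟩
    have hx' : ![0, 0, 0, 0, 0, 0, x 0, x 1] = k • v := by
      rw [← hMx]; exact hx
    have hz : ∀ i : Fin 8, (![0, 0, 0, 0, 0, 0, x 0, x 1] : Fin 8 → ℤ) i = k * v i :=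
      fun i => by rw [hx']; rfl
    have hv : ∀ i : Fin 8, (![0, 0, 0, 0, 0, 0, x 0, x 1] : Fin 8 → ℤ) i = 0 → v i = 0 := by
      intro i hi
      have := (hz i).symm.trans hi
      exact (mul_eq_zero.mp this).resolve_left hk
    refine ⟨![v 6, v 7], ?_⟩
    show Mmat.mulVec _ = v
    rw [hMx]
    funext i
    fin_cases i <;>
      first
        | exact (hv 0 rfl).symm
        | exact (hv 1 rfl).symm
        | exact (hv 2 rfl).symm
        | exact (hv 3 rfl).symm
        | exact (hv 4 rfl).symm
        | exact (hv 5 rfl).symm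
        | rfl
  · -- injectivity of j
    intro a b hab
    have h := congrArg (LNmat.mulVec) hab
    simpa [Matrix.mulVecLin_apply, Matrix.mulVec_mulVec, hLN, Matrix.one_mulVec] using h
  · -- j preserves the forms
    intro x y
    rw [Matrix.mulVecLin_apply, Matrix.mulVecLin_apply, key, hNE]
  · -- range of j is the orthogonal complement
    intro v
    constructor
    · rintro ⟨x, rfl⟩ w
      rw [Matrix.mulVecLin_apply, Matrix.mulVecLin_apply, key, hNM]
      simp
    · intro hv
      have h1 := hv ![1, 0]
      have h2 := hv ![0, 1]
      rw [show Mmat.mulVecLin ![1, 0] = Mmat.mulVec ![1, 0] from rfl, hcol1] at h1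
      rw [show Mmat.mulVecLin ![0, 1] = Mmat.mulVec ![0, 1] from rfl, hcol2] at h2
      simp [dotProduct, Fin.sum_univ_eight] at h1 h2
      refine ⟨![-v 7, -v 4 + 3*v 7, v 1 - v 3 + v 7, v 0 + v 1 - v 3 - v 4 + 3*v 7,
        v 1 + v 2 - v 3 - v 4 + 2*v 7, v 1 - v 4 + v 7], ?_⟩
      show Nmat.mulVec _ = v
      simp only [Nmat, Matrix.cons_mulVec, Matrix.cons_dotProduct, Matrix.vecHead,
        Matrix.vecTail, Matrix.empty_mulVec, Matrix.dotProduct_of_isEmpty, Function.comp]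
      funext i
      fin_cases i <;> simp <;> linarith
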